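/- Let H be a separable infinite-dimensional complex Hilbert space and let U, V ∈ L(H) be surjective operators with infinite-dimensional kernels (i.e. each satisfies Caradus' condition (C)). On K = H ⊕ H define U₀(x,y) = (Ux, y) and V₀(x,y) = (x, Vy). Then U₀ and V₀ are commuting surjections on K, Ker(U₀) = Ker(U) × {0}, Ker(V₀) = {0} × Ker(V), the intersection Ker(U₀) ∩ Ker(V₀) = {0}, and consequently (U₀, V₀) is not a universal commuting pair, even though Ker(U₀V₀) = Ker(U₀) + Ker(V₀). -/

import Mathlib

noncomputable section

/-- A commuting pair `(U₁, U₂)` is a *universal commuting pair* if for every commuting pair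
`(S₁, S₂)` there are a nonzero `c ∈ ℂ`, a closed subspace `M` invariant under both `U₁` and
`U₂`, and a continuous linear isomorphism `V : H ≃ M` with `Uᵢ (V x) = c • V (Sᵢ x)` for
all `x` and `i = 1, 2`. -/
def IsUniversalPair {H : Type*} [NormedAddCommGroup H] [InnerProductSpace ℂ H]
    (U₁ U₂ : H →L[ℂ] H) : Prop :=
  U₁.comp U₂ = U₂.comp U₁ ∧
  ∀ S₁ S₂ : H →L[ℂ] H, S₁.comp S₂ = S₂.comp S₁ →
    ∃ M : Submodule ℂ H, IsClosed (M : Set H) ∧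
      (∀ x ∈ M, U₁ x ∈ M) ∧ (∀ x ∈ M, U₂ x ∈ M) ∧
      ∃ c : ℂ, c ≠ 0 ∧ ∃ V : H ≃L[ℂ] M,
        (∀ x : H, U₁ (V x : H) = c • ((V (S₁ x) : H))) ∧
        (∀ x : H, U₂ (V x : H) = c • ((V (S₂ x) : H)))

/-- The element `(x, y)` of the Hilbert-space direct sum `H ⊕ H`. -/
def mkPair {H : Type*} [NormedAddCommGroup H] [InnerProductSpace ℂ H] (x y : H) :
    WithLp 2 (H × H) :=
  (WithLp.equiv 2 (H × H)).symm (x, y)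

/-- Let `U, V` be surjections with infinite-dimensional kernels on `H`, and on `K = H ⊕ H`
let `U₀ (x,y) = (U x, y)` and `V₀ (x,y) = (x, V y)`. Then `U₀, V₀` are commuting surjections
with `Ker U₀ = Ker U × {0}`, `Ker V₀ = {0} × Ker V`, `Ker U₀ ∩ Ker V₀ = {0}`, so `(U₀, V₀)`
is not a universal commuting pair, even though `Ker (U₀ V₀) = Ker U₀ + Ker V₀`. -/
theorem diagonal_pair_not_universal {H : Type*} [NormedAddCommGroup H]
    [InnerProductSpace ℂ H] [CompleteSpace H] [TopologicalSpace.SeparableSpace H]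
    (hinf : ¬ FiniteDimensional ℂ H)
    (U V : H →L[ℂ] H)
    (hUsurj : Function.Surjective U) (hUker : ¬ FiniteDimensional ℂ (LinearMap.ker (U : H →ₗ[ℂ] H)))
    (hVsurj : Function.Surjective V) (hVker : ¬ FiniteDimensional ℂ (LinearMap.ker (V : H →ₗ[ℂ] H)))
    (U₀ V₀ : WithLp 2 (H × H) →L[ℂ] WithLp 2 (H × H))
    (hU₀ : ∀ x y : H, U₀ (mkPair x y) = mkPair (U x) y)
    (hV₀ : ∀ x y : H, V₀ (mkPair x y) = mkPair x (V y)) :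
    U₀.comp V₀ = V₀.comp U₀ ∧
    Function.Surjective U₀ ∧ Function.Surjective V₀ ∧
    (∀ x y : H, mkPair x y ∈ LinearMap.ker (U₀ : WithLp 2 (H × H) →ₗ[ℂ] WithLp 2 (H × H)) ↔
      x ∈ LinearMap.ker (U : H →ₗ[ℂ] H) ∧ y = 0) ∧
    (∀ x y : H, mkPair x y ∈ LinearMap.ker (V₀ : WithLp 2 (H × H) →ₗ[ℂ] WithLp 2 (H × H)) ↔
      x = 0 ∧ y ∈ LinearMap.ker (V : H →ₗ[ℂ] H)) ∧
    LinearMap.ker (U₀ : WithLp 2 (H × H) →ₗ[ℂ] WithLp 2 (H × H)) ⊓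
      LinearMap.ker (V₀ : WithLp 2 (H × H) →ₗ[ℂ] WithLp 2 (H × H)) = ⊥ ∧
    ¬ IsUniversalPair U₀ V₀ ∧
    LinearMap.ker (U₀.comp V₀ : WithLp 2 (H × H) →ₗ[ℂ] WithLp 2 (H × H)) =
      LinearMap.ker (U₀ : WithLp 2 (H × H) →ₗ[ℂ] WithLp 2 (H × H)) ⊔
      LinearMap.ker (V₀ : WithLp 2 (H × H) →ₗ[ℂ] WithLp 2 (H × H)) := by
  -- basic facts about `mkPair`
  have hrep : ∀ z : WithLp 2 (H × H),
      z = mkPair (WithLp.equiv 2 (H × H) z).1 (WithLp.equiv 2 (H × H) z).2 := fun z => rfl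
  have hmk_inj : ∀ a b a' b' : H, mkPair a b = mkPair a' b' ↔ a = a' ∧ b = b' := by
    intro a b a' b'
    constructor
    · intro h; simpa [mkPair, Prod.ext_iff] using h
    · rintro ⟨rfl, rfl⟩; rfl
  have hzero : (0 : WithLp 2 (H × H)) = mkPair 0 0 := rfl
  have hmk_eq_zero : ∀ a b : H, mkPair a b = 0 ↔ a = 0 ∧ b = 0 := by
    intro a b; rw [hzero, hmk_inj]
  have hadd : ∀ x y : H, mkPair x 0 + mkPair 0 y = mkPair x y := by
    intro x y
    simp [mkPair, ← WithLp.toLp_add, Prod.ext_iff]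
  -- commutativity
  have hcomm : U₀.comp V₀ = V₀.comp U₀ := by
    ext z
    rw [ContinuousLinearMap.comp_apply, ContinuousLinearMap.comp_apply, hrep z,
      hU₀, hV₀, hU₀, hV₀]
  refine ⟨hcomm, ?_, ?_, ?_, ?_, ?_, ?_, ?_⟩
  · -- U₀ surjective
    intro z
    obtain ⟨x, hx⟩ := hUsurj (WithLp.equiv 2 (H × H) z).1
    exact ⟨mkPair x (WithLp.equiv 2 (H × H) z).2, by rw [hU₀, hx]; exact (hrep z).symm⟩
  · intro z
    obtain ⟨y, hy⟩ := hVsurj (WithLp.equiv 2 (H × H) z).2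
    exact ⟨mkPair (WithLp.equiv 2 (H × H) z).1 y, by rw [hV₀, hy]; exact (hrep z).symm⟩
  · -- ker U₀ description
    intro x y
    rw [LinearMap.mem_ker, ContinuousLinearMap.coe_coe, hU₀, hmk_eq_zero]
    exact Iff.rfl
  · intro x y
    rw [LinearMap.mem_ker, ContinuousLinearMap.coe_coe, hV₀, hmk_eq_zero]
    exact Iff.rfl
  · -- trivial intersection
    rw [eq_bot_iff]
    rintro z ⟨hz1, hz2⟩
    have h1 : U₀ z = 0 := hz1
    have h2 : V₀ z = 0 := hz2
    rw [hrep z, hU₀, hmk_eq_zero] at h1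
    rw [hrep z, hV₀, hmk_eq_zero] at h2
    have hz0 : z = 0 := by rw [hrep z, hmk_eq_zero]; exact ⟨h2.1, h1.2⟩
    simpa using hz0
  · -- not universal
    rintro ⟨-, huniv⟩
    obtain ⟨M, -, -, -, c, -, W, hW1, hW2⟩ := huniv 0 0 (by simp)
    have hWzero : ∀ z : WithLp 2 (H × H), W z = 0 := by
      intro z
      have h1 : U₀ (W z : WithLp 2 (H × H)) = 0 := by
        rw [hW1 z]; simp
      have h2 : V₀ (W z : WithLp 2 (H × H)) = 0 := by
        rw [hW2 z]; simp
      set w : WithLp 2 (H × H) := (W z : WithLp 2 (H × H)) with hw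
      rw [hrep w, hU₀, hmk_eq_zero] at h1
      rw [hrep w, hV₀, hmk_eq_zero] at h2
      have : w = 0 := by
        rw [hrep w, hmk_eq_zero]; exact ⟨h2.1, h1.2⟩
      exact Subtype.ext this
    have hall : ∀ z : WithLp 2 (H × H), z = 0 := by
      intro z
      have h0 : W z = W 0 := by rw [hWzero z, map_zero]
      exact W.injective h0
    have hsub : Subsingleton H := by
      constructor
      intro a b
      have h2 : mkPair a 0 = mkPair b 0 :=
        sub_eq_zero.mp (hall (mkPair a 0 - mkPair b 0))
      exact ((hmk_inj a 0 b 0).mp h2).1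
    exact hinf (Module.Finite.of_basis (Module.Basis.empty (ι := Empty) (R := ℂ) (M := H)))
  · -- kernel of the product
    apply le_antisymm
    · intro z hz
      have hz' : U₀ (V₀ z) = 0 := hz
      rw [hrep z, hV₀, hU₀, hmk_eq_zero] at hz'
      rw [hrep z, ← hadd]
      apply Submodule.add_mem_sup
      · show U₀ _ = 0
        rw [hU₀, hmk_eq_zero]
        exact ⟨hz'.1, rfl⟩
      · show V₀ _ = 0
        rw [hV₀, hmk_eq_zero]
        exact ⟨rfl, hz'.2⟩
    · rw [sup_le_iff]
      constructor
      · intro z hz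
        have hz' : U₀ z = 0 := hz
        rw [hrep z, hU₀, hmk_eq_zero] at hz'
        show U₀ (V₀ z) = 0
        rw [hrep z, hV₀, hU₀, hmk_eq_zero]
        exact ⟨hz'.1, by rw [hz'.2, map_zero]⟩
      · intro z hz
        have hz' : V₀ z = 0 := hz
        rw [hrep z, hV₀, hmk_eq_zero] at hz'
        show U₀ (V₀ z) = 0
        rw [hrep z, hV₀, hU₀, hmk_eq_zero]
        exact ⟨by rw [hz'.1, map_zero], hz'.2⟩

end
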